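/- (Remark: necessity of condition 1 in Theorem 1.1) Let H be a complex Hilbert space and L, M closed linear subspaces, and let A₁ < ∞ be a constant. Suppose that every x ∈ H can be represented as x = x_L + x_M with x_L ∈ L, x_M ∈ M, and ‖x_L‖ ≤ A₁‖x‖. Then c(L,M) < 1. -/

import Mathlib

open scoped InnerProductSpace Pointwise

/-- The inclination `c(L,M)` of two subspaces `L`, `M` of a complex Hilbert space:
the supremum of `|⟪u,v⟫| / (‖u‖‖v‖)` over nonzero `u ∈ L ⊖ Q` and nonzero `v ∈ M ⊖ Q`,
where `Q = L ⊓ M` and `L ⊖ Q = L ⊓ Qᗮ`, `M ⊖ Q = M ⊓ Qᗮ`. -/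
noncomputable def inclination {H : Type*} [NormedAddCommGroup H] [InnerProductSpace ℂ H]
    (L M : Submodule ℂ H) : ℝ :=
  sSup {r : ℝ | ∃ u ∈ L ⊓ (L ⊓ M)ᗮ, ∃ v ∈ M ⊓ (L ⊓ M)ᗮ,
    u ≠ 0 ∧ v ≠ 0 ∧ r = ‖⟪u, v⟫_ℂ‖ / (‖u‖ * ‖v‖)}

/-- Core estimate: for unit vectors `u ∈ L ⊖ Q`, `v ∈ M ⊖ Q` with real inner product `c`,
the bounded decomposition hypothesis forces `1 ≤ A₁² (2 - 2c)`. -/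
lemma core_est {H : Type*} [NormedAddCommGroup H] [InnerProductSpace ℂ H]
    (L M : Submodule ℂ H) (A₁ : ℝ)
    (hdec : ∀ x : H, ∃ xL ∈ L, ∃ xM ∈ M, x = xL + xM ∧ ‖xL‖ ≤ A₁ * ‖x‖)
    (u v : H) (hu : u ∈ L ⊓ (L ⊓ M)ᗮ) (hv : v ∈ M ⊓ (L ⊓ M)ᗮ)
    (hu1 : ‖u‖ = 1) (hv1 : ‖v‖ = 1) (c : ℝ) (hc : ⟪u, v⟫_ℂ = (c : ℂ)) :
    1 ≤ A₁ ^ 2 * (2 - 2 * c) := by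
  obtain ⟨xL, hxL, xM, hxM, hx, hb⟩ := hdec (u - v)
  have hqL : u - xL ∈ L := sub_mem hu.1 hxL
  have h2 : u - xL = v + xM := by
    rw [sub_eq_iff_eq_add]
    rw [sub_eq_iff_eq_add] at hx
    rw [hx]; abel
  have hqM : u - xL ∈ M := h2 ▸ add_mem hv.1 hxM
  have hq : u - xL ∈ L ⊓ M := ⟨hqL, hqM⟩
  have h0 : ⟪u - xL, u⟫_ℂ = 0 := (Submodule.mem_orthogonal _ _).mp hu.2 _ hq
  have hx0 : ⟪u, u - xL⟫_ℂ = 0 := inner_eq_zero_symm.mp h0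
  have huu : ⟪u, u⟫_ℂ = 1 := by
    rw [inner_self_eq_norm_sq_to_K, hu1]; norm_num
  have h1 : ⟪u, xL⟫_ℂ = 1 := by
    have : ⟪u, u⟫_ℂ - ⟪u, xL⟫_ℂ = 0 := by rw [← inner_sub_right]; exact hx0
    rw [huu] at this
    linear_combination -this
  have hnorm : (1 : ℝ) ≤ ‖xL‖ := by
    calc (1 : ℝ) = ‖⟪u, xL⟫_ℂ‖ := by rw [h1]; norm_num
    _ ≤ ‖u‖ * ‖xL‖ := norm_inner_le_norm _ _
    _ = ‖xL‖ := by rw [hu1, one_mul]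
  have hAx : 1 ≤ A₁ * ‖u - v‖ := le_trans hnorm hb
  have hx2 : ‖u - v‖ ^ 2 = 2 - 2 * c := by
    rw [@norm_sub_sq ℂ, hu1, hv1, hc]
    simp
    ring
  have h4 : 1 ≤ (A₁ * ‖u - v‖) ^ 2 := by nlinarith [hAx]
  nlinarith [h4, hx2]

/-- General form of the estimate for arbitrary nonzero vectors. -/
lemma key_est {H : Type*} [NormedAddCommGroup H] [InnerProductSpace ℂ H]
    (L M : Submodule ℂ H) (A₁ : ℝ)
    (hdec : ∀ x : H, ∃ xL ∈ L, ∃ xM ∈ M, x = xL + xM ∧ ‖xL‖ ≤ A₁ * ‖x‖)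
    (u v : H) (hu : u ∈ L ⊓ (L ⊓ M)ᗮ) (hv : v ∈ M ⊓ (L ⊓ M)ᗮ)
    (hu0 : u ≠ 0) (hv0 : v ≠ 0) :
    1 ≤ A₁ ^ 2 * (2 - 2 * (‖⟪u, v⟫_ℂ‖ / (‖u‖ * ‖v‖))) := by
  have hun : (0 : ℝ) < ‖u‖ := norm_pos_iff.mpr hu0
  have hvn : (0 : ℝ) < ‖v‖ := norm_pos_iff.mpr hv0
  set α : ℂ := ⟪u, v⟫_ℂ with hα
  set v₀ : H := ((‖v‖ : ℂ))⁻¹ • v with hv₀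
  have hv₀mem : v₀ ∈ M ⊓ (L ⊓ M)ᗮ := Submodule.smul_mem _ _ hv
  have hv₀1 : ‖v₀‖ = 1 := by
    rw [hv₀, norm_smul]
    simp [hvn.ne']
  by_cases hzero : α = 0
  · set u₀ : H := ((‖u‖ : ℂ))⁻¹ • u with hu₀
    have hu₀mem : u₀ ∈ L ⊓ (L ⊓ M)ᗮ := Submodule.smul_mem _ _ hu
    have hu₀1 : ‖u₀‖ = 1 := by
      rw [hu₀, norm_smul]
      simp [hun.ne']
    have hinner : ⟪u₀, v₀⟫_ℂ = ((‖α‖ / (‖u‖ * ‖v‖) : ℝ) : ℂ) := by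
      rw [hu₀, hv₀, inner_smul_left, inner_smul_right, ← hα, hzero]
      simp
    exact core_est L M A₁ hdec u₀ v₀ hu₀mem hv₀mem hu₀1 hv₀1 _ hinner
  · set u₀ : H := (α / ((‖α‖ : ℂ) * (‖u‖ : ℂ))) • u with hu₀
    have hu₀mem : u₀ ∈ L ⊓ (L ⊓ M)ᗮ := Submodule.smul_mem _ _ hu
    have hαn : (0 : ℝ) < ‖α‖ := norm_pos_iff.mpr hzero
    have hu₀1 : ‖u₀‖ = 1 := by
      rw [hu₀, norm_smul, norm_div, norm_mul]
      simp only [Complex.norm_real, Real.norm_eq_abs, abs_of_pos hαn, abs_of_pos hun]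
      rw [div_mul_eq_mul_div]
      exact div_self (ne_of_gt (mul_pos hαn hun))
    have ha : ((‖α‖ : ℝ) : ℂ) ≠ 0 := by exact_mod_cast hαn.ne'
    have hbu : ((‖u‖ : ℝ) : ℂ) ≠ 0 := by exact_mod_cast hun.ne'
    have hbv : ((‖v‖ : ℝ) : ℂ) ≠ 0 := by exact_mod_cast hvn.ne'
    have hmc : (starRingEnd ℂ) α * α = ((‖α‖ : ℂ)) ^ 2 := by
      rw [Complex.conj_mul']
    have hinner : ⟪u₀, v₀⟫_ℂ = ((‖α‖ / (‖u‖ * ‖v‖) : ℝ) : ℂ) := by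
      rw [hu₀, hv₀, inner_smul_left, inner_smul_right, ← hα]
      rw [map_div₀, map_mul]
      simp only [Complex.conj_ofReal]
      rw [Complex.ofReal_div, Complex.ofReal_mul]
      rw [show (starRingEnd ℂ) α / ((‖α‖ : ℂ) * (‖u‖ : ℂ)) * (((‖v‖ : ℂ))⁻¹ * α) =
          ((starRingEnd ℂ) α * α) / ((‖α‖ : ℂ) * ((‖u‖ : ℂ) * (‖v‖ : ℂ))) from by ring]
      rw [hmc, sq, mul_div_mul_left _ _ ha]
    exact core_est L M A₁ hdec u₀ v₀ hu₀mem hv₀mem hu₀1 hv₀1 _ hinner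

theorem stmt_8 {H : Type*} [NormedAddCommGroup H] [InnerProductSpace ℂ H] [CompleteSpace H]
    (L M : Submodule ℂ H) (hL : IsClosed (L : Set H)) (hM : IsClosed (M : Set H))
    (hLQ : ∃ u ∈ L ⊓ (L ⊓ M)ᗮ, u ≠ 0) (hMQ : ∃ v ∈ M ⊓ (L ⊓ M)ᗮ, v ≠ 0)
    (A₁ : ℝ)
    (hdec : ∀ x : H, ∃ xL ∈ L, ∃ xM ∈ M, x = xL + xM ∧ ‖xL‖ ≤ A₁ * ‖x‖) :
    inclination L M < 1 := by
  obtain ⟨u, hu, hu0⟩ := hLQ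
  obtain ⟨v, hv, hv0⟩ := hMQ
  have hk := key_est L M A₁ hdec u v hu hv hu0 hv0
  have hc0 : (0 : ℝ) ≤ ‖⟪u, v⟫_ℂ‖ / (‖u‖ * ‖v‖) := by positivity
  have hA2 : (1 : ℝ) / 2 ≤ A₁ ^ 2 := by nlinarith
  have h2A : (0 : ℝ) < 2 * A₁ ^ 2 := by linarith
  have hb0 : 0 ≤ 1 - 1 / (2 * A₁ ^ 2) := by
    have : 1 / (2 * A₁ ^ 2) ≤ 1 := by
      rw [div_le_one h2A]; linarith
    linarith
  have hb1 : 1 - 1 / (2 * A₁ ^ 2) < 1 := by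
    have : 0 < 1 / (2 * A₁ ^ 2) := by positivity
    linarith
  refine lt_of_le_of_lt (Real.sSup_le ?_ hb0) hb1
  rintro r ⟨u', hu', v', hv', hu'0, hv'0, rfl⟩
  have hk' := key_est L M A₁ hdec u' v' hu' hv' hu'0 hv'0
  have h : 1 / (2 * A₁ ^ 2) ≤ 1 - ‖⟪u', v'⟫_ℂ‖ / (‖u'‖ * ‖v'‖) := by
    rw [div_le_iff₀ h2A]; nlinarith
  linarith
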